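/- Let 0 ≤ j < k be integers and x, y real numbers; write z = x + iy and z̄ = x − iy. (a) Let D_{j,k} be the tridiagonal determinant built from p_m = (x−m)² + y², q_m = 2(x−m) − 1, r_m = 1. Then (z − z̄) · (−1)^{k−j−1} · D_{j,k} = ∏_{m=j}^{k−1}(z − m) − ∏_{m=j}^{k−1}(z̄ − m). (b) Let D'_{j,k} be the tridiagonal determinant built from p_m = (x+m)² + y², q_m = 2(x+m) + 1, r_m = 1. Then (z − z̄) · (−1)^{k−j−1} · D'_{j,k} = ∏_{m=j}^{k−1}(z + m) − ∏_{m=j}^{k−1}(z̄ + m). -/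

import Mathlib

open ComplexConjugate

/-- The `n × n` tridiagonal matrix with diagonal `-q j, …, -q (j+n-1)`,
superdiagonal `p (j+1), …, p (j+n-1)` and subdiagonal `r j, …, r (j+n-2)`. -/
def tridiag {R : Type*} [CommRing R] (p q r : ℕ → R) (j n : ℕ) :
    Matrix (Fin n) (Fin n) R :=
  Matrix.of fun a b =>
    if (a : ℕ) = b then -q (j + a)
    else if (a : ℕ) + 1 = b then p (j + b)
    else if (b : ℕ) + 1 = a then r (j + b)
    else 0

/-- The tridiagonal determinant `D_{j,k}` (with the convention `D_{j,j+1} = 1`). -/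
def Dtri {R : Type*} [CommRing R] (p q r : ℕ → R) (j k : ℕ) : R :=
  (tridiag p q r j (k - j - 1)).det

lemma tridiag_shift {R : Type*} [CommRing R] (p q r : ℕ → R) (j n : ℕ) :
    (tridiag p q r j (n+1)).submatrix Fin.succ Fin.succ = tridiag p q r (j+1) n := by
  ext a b
  simp only [tridiag, Matrix.submatrix_apply, Matrix.of_apply, Fin.val_succ]
  have h1 : j + (↑a + 1) = j + 1 + ↑a := by omega
  have h2 : j + (↑b + 1) = j + 1 + ↑b := by omega
  rw [h1, h2]
  split_ifs <;> first | rfl | omega | exact (by assumption : False).elim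

lemma tridiag_det_rec {R : Type*} [CommRing R] (p q r : ℕ → R) (j n : ℕ) :
    (tridiag p q r j (n+2)).det
      = -q j * (tridiag p q r (j+1) (n+1)).det
        - p (j+1) * r j * (tridiag p q r (j+2) n).det := by
  rw [Matrix.det_succ_row_zero, Fin.sum_univ_succ, Fin.sum_univ_succ]
  have hz : ∀ i : Fin n, (-1:R) ^ ((i.succ.succ : Fin (n+2)) : ℕ) *
      (tridiag p q r j (n+2)) 0 i.succ.succ *
      ((tridiag p q r j (n+2)).submatrix Fin.succ (i.succ.succ).succAbove).det = 0 := by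
    intro i
    have : (tridiag p q r j (n+2)) 0 i.succ.succ = 0 := by
      simp only [tridiag, Matrix.of_apply, Fin.val_succ, Fin.val_zero]
      split_ifs <;> first | rfl | omega | exact (by assumption : False).elim
    rw [this]; ring
  rw [Finset.sum_eq_zero (fun i _ => hz i), add_zero]
  have e00 : (tridiag p q r j (n+2)) 0 0 = -q j := by
    simp [tridiag]
  have e01 : (tridiag p q r j (n+2)) 0 1 = p (j+1) := by
    simp only [tridiag, Matrix.of_apply, Fin.val_zero, Fin.val_one]
    norm_num
  have s0 : ((tridiag p q r j (n+2)).submatrix Fin.succ (0 : Fin (n+2)).succAbove).det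
      = (tridiag p q r (j+1) (n+1)).det := by
    rw [Fin.succAbove_zero, tridiag_shift]
  have s1 : ((tridiag p q r j (n+2)).submatrix Fin.succ (1 : Fin (n+2)).succAbove).det
      = r j * (tridiag p q r (j+2) n).det := by
    rw [Matrix.det_succ_column_zero, Fin.sum_univ_succ]
    have hz2 : ∀ i : Fin n, (-1:R) ^ ((i.succ : Fin (n+1)) : ℕ) *
        ((tridiag p q r j (n+2)).submatrix Fin.succ (1 : Fin (n+2)).succAbove) i.succ 0 *
        (((tridiag p q r j (n+2)).submatrix Fin.succ (1 : Fin (n+2)).succAbove).submatrix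
          i.succ.succAbove Fin.succ).det = 0 := by
      intro i
      have : ((tridiag p q r j (n+2)).submatrix Fin.succ (1 : Fin (n+2)).succAbove) i.succ 0 = 0 := by
        simp only [Matrix.submatrix_apply, tridiag, Matrix.of_apply]
        have : (((1 : Fin (n+2)).succAbove 0 : Fin (n+2)) : ℕ) = 0 := by
          simp [Fin.succAbove]
        rw [this]
        simp only [Fin.val_succ, Fin.val_succ]
        split_ifs <;> first | rfl | omega | exact (by assumption : False).elim
      rw [this]; ring
    rw [Finset.sum_eq_zero (fun i _ => hz2 i), add_zero]
    have e10 : ((tridiag p q r j (n+2)).submatrix Fin.succ (1 : Fin (n+2)).succAbove) 0 0 = r j := by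
      simp only [Matrix.submatrix_apply, tridiag, Matrix.of_apply]
      have : (((1 : Fin (n+2)).succAbove 0 : Fin (n+2)) : ℕ) = 0 := by simp [Fin.succAbove]
      rw [this]
      norm_num
    have s2 : (((tridiag p q r j (n+2)).submatrix Fin.succ (1 : Fin (n+2)).succAbove).submatrix
        (0 : Fin (n+1)).succAbove Fin.succ).det = (tridiag p q r (j+2) n).det := by
      congr 1
      ext a b
      simp only [Matrix.submatrix_apply, tridiag, Matrix.of_apply, Fin.succAbove_zero]
      have hb : (((1 : Fin (n+2)).succAbove b.succ : Fin (n+2)) : ℕ) = (b : ℕ) + 2 := by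
        simp [Fin.succAbove, Fin.lt_iff_val_lt_val]
      rw [hb]
      simp only [Fin.val_succ]
      have h1 : j + (↑a + 1 + 1) = j + 2 + ↑a := by omega
      have h2 : j + (↑b + 2) = j + 2 + ↑b := by omega
      rw [h1, h2]
      split_ifs <;> first | rfl | omega | exact (by assumption : False).elim
    rw [e10, s2]
    simp
  simp only [Fin.succ_zero_eq_one, Fin.val_zero, Fin.val_one, pow_zero, pow_one]
  rw [e00, e01, s0, s1]
  ring

lemma prod_shift {R : Type*} [CommRing R] (g : ℕ → R) (k j : ℕ) :
    ∏ i ∈ Finset.range (k+2), g (j+i)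
      = g j * ∏ i ∈ Finset.range (k+1), g (j+1+i) := by
  rw [Finset.prod_range_succ']
  simp only [add_zero]
  rw [mul_comm]
  congr 1
  exact Finset.prod_congr rfl fun i _ => by congr 1; omega

lemma tridiag_key {R : Type*} [CommRing R] (f : ℕ → R) (w : R) :
    ∀ n j, (2*w) * (-1)^n *
      (tridiag (fun m => f m ^ 2 - w ^ 2) (fun m => f m + f (m+1)) (fun _ => 1) j n).det
      = ∏ i ∈ Finset.range (n+1), (f (j+i) + w)
        - ∏ i ∈ Finset.range (n+1), (f (j+i) - w) := by
  intro n
  induction n using Nat.strong_induction_on with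
  | _ n IH =>
    match n with
    | 0 =>
      intro j
      simp [Matrix.det_fin_zero, Finset.prod_range_one]
      ring
    | 1 =>
      intro j
      rw [Matrix.det_fin_one]
      simp only [tridiag, Matrix.of_apply, Fin.val_zero, if_true, Finset.prod_range_succ,
        Finset.prod_range_one, add_zero]
      norm_num
      ring
    | (n+2) =>
      intro j
      rw [tridiag_det_rec]
      have ih1 := IH (n+1) (by omega) (j+1)
      have ih2 := IH n (by omega) (j+2)
      have hj2 : j + 1 + 1 = j + 2 := by omega
      rw [prod_shift (fun m => f m + w), prod_shift (fun m => f m - w),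
        prod_shift (fun m => f m + w), prod_shift (fun m => f m - w), hj2]
      rw [prod_shift (fun m => f m + w), prod_shift (fun m => f m - w), hj2] at ih1
      linear_combination (f j + f (j+1)) * ih1 - (f (j+1) ^ 2 - w ^ 2) * ih2

example : True := trivial

lemma tridiag_det_coe (p q r : ℕ → ℝ) (j n : ℕ) :
    ((tridiag p q r j n).det : ℂ)
      = (tridiag (fun m => (p m : ℂ)) (fun m => (q m : ℂ)) (fun m => (r m : ℂ)) j n).det := by
  have : ((tridiag p q r j n).det : ℂ) = Complex.ofRealHom (tridiag p q r j n).det := rfl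
  rw [this, RingHom.map_det]
  congr 1
  ext a b
  simp only [tridiag, Matrix.map_apply, Matrix.of_apply, RingHom.coe_coe]
  split_ifs <;> simp_all

lemma main_aux (y : ℝ) (f p q : ℕ → ℝ)
    (hp : ∀ m, p m = f m ^ 2 + y ^ 2) (hq : ∀ m, q m = f m + f (m+1)) (j n : ℕ) :
    (2 * ((y:ℂ) * Complex.I)) * (-1) ^ n * ((tridiag p q (fun _ => 1) j n).det : ℂ)
      = ∏ i ∈ Finset.range (n+1), ((f (j+i) : ℂ) + (y:ℂ) * Complex.I)
        - ∏ i ∈ Finset.range (n+1), ((f (j+i) : ℂ) - (y:ℂ) * Complex.I) := by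
  have hP : (fun m => ((p m : ℝ) : ℂ))
      = fun m => ((f m : ℂ)) ^ 2 - ((y:ℂ) * Complex.I) ^ 2 := by
    funext m
    rw [hp m]
    push_cast
    rw [mul_pow, Complex.I_sq]
    ring
  have hQ : (fun m => ((q m : ℝ) : ℂ)) = fun m => ((f m : ℂ)) + ((f (m+1) : ℂ)) := by
    funext m; rw [hq m]; push_cast; ring
  have hR : (fun _ : ℕ => ((1:ℝ) : ℂ)) = fun _ : ℕ => (1:ℂ) := by funext; norm_num
  rw [tridiag_det_coe, hP, hQ, hR]
  exact tridiag_key (fun m => (f m : ℂ)) ((y:ℂ) * Complex.I) n j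


/-- Proposition 2.4 for the falling factorial basis (a) and rising factorial basis (b). -/
theorem stmt_4 (j k : ℕ) (hjk : j < k) (x y : ℝ) :
    (((x + y * Complex.I) - conj (x + y * Complex.I)) * (-1) ^ (k - j - 1) *
        ((Dtri (fun m => (x - m) ^ 2 + y ^ 2) (fun m => 2 * (x - m) - 1)
            (fun _ => (1 : ℝ)) j k : ℝ) : ℂ)
      = (∏ m ∈ Finset.Icc j (k - 1), ((x + y * Complex.I) - m))
        - (∏ m ∈ Finset.Icc j (k - 1), (conj (x + y * Complex.I) - m)))
    ∧
    (((x + y * Complex.I) - conj (x + y * Complex.I)) * (-1) ^ (k - j - 1) *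
        ((Dtri (fun m => (x + m) ^ 2 + y ^ 2) (fun m => 2 * (x + m) + 1)
            (fun _ => (1 : ℝ)) j k : ℝ) : ℂ)
      = (∏ m ∈ Finset.Icc j (k - 1), ((x + y * Complex.I) + m))
        - (∏ m ∈ Finset.Icc j (k - 1), (conj (x + y * Complex.I) + m))) := by

  have hc : conj ((x:ℂ) + y * Complex.I) = (x:ℂ) - y * Complex.I := by
    rw [map_add, map_mul, Complex.conj_ofReal, Complex.conj_ofReal, Complex.conj_I]
    ring
  have hk1 : (k - 1).succ = k := by omega
  have hkj : k - j = (k - j - 1) + 1 := by omega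
  constructor
  · have key := main_aux y (fun m => x - m) (fun m => (x - m) ^ 2 + y ^ 2)
      (fun m => 2 * (x - m) - 1) (fun m => rfl) (fun m => by push_cast; ring) j (k - j - 1)
    rw [← Finset.Ico_add_one_right_eq_Icc, Nat.add_one, hk1,
      Finset.prod_Ico_eq_prod_range (fun m => ((x:ℂ) + y * Complex.I - m)) j k,
      Finset.prod_Ico_eq_prod_range (fun m => (conj ((x:ℂ) + y * Complex.I) - m)) j k,
      hkj, hc]
    unfold Dtri
    have h1 : ∀ i ∈ Finset.range (k - j - 1 + 1),
        ((x:ℂ) + y * Complex.I - (j + i : ℕ)) = ((x - (j + i : ℕ) : ℝ) : ℂ) + y * Complex.I := by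
      intro i _; push_cast; ring
    have h2 : ∀ i ∈ Finset.range (k - j - 1 + 1),
        ((x:ℂ) - y * Complex.I - (j + i : ℕ)) = ((x - (j + i : ℕ) : ℝ) : ℂ) - y * Complex.I := by
      intro i _; push_cast; ring
    rw [Finset.prod_congr rfl h1, Finset.prod_congr rfl h2]
    simp only [Nat.add_sub_cancel]
    linear_combination key
  · have key := main_aux y (fun m => x + m) (fun m => (x + m) ^ 2 + y ^ 2)
      (fun m => 2 * (x + m) + 1) (fun m => rfl) (fun m => by push_cast; ring) j (k - j - 1)
    rw [← Finset.Ico_add_one_right_eq_Icc, Nat.add_one, hk1,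
      Finset.prod_Ico_eq_prod_range (fun m => ((x:ℂ) + y * Complex.I + m)) j k,
      Finset.prod_Ico_eq_prod_range (fun m => (conj ((x:ℂ) + y * Complex.I) + m)) j k,
      hkj, hc]
    unfold Dtri
    have h1 : ∀ i ∈ Finset.range (k - j - 1 + 1),
        ((x:ℂ) + y * Complex.I + (j + i : ℕ)) = ((x + (j + i : ℕ) : ℝ) : ℂ) + y * Complex.I := by
      intro i _; push_cast; ring
    have h2 : ∀ i ∈ Finset.range (k - j - 1 + 1),
        ((x:ℂ) - y * Complex.I + (j + i : ℕ)) = ((x + (j + i : ℕ) : ℝ) : ℂ) - y * Complex.I := by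
      intro i _; push_cast; ring
    rw [Finset.prod_congr rfl h1, Finset.prod_congr rfl h2]
    simp only [Nat.add_sub_cancel]
    linear_combination key
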